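/- If G and H are directed graphs whose free categories G* and H* are equivalent as categories, then G and H are isomorphic as graphs. -/

import Mathlib

open CategoryTheory

namespace Stmt15Aux

variable {V : Type*} [Quiver V]

lemma len_comp {a b c : Paths V} (f : a ⟶ b) (g : b ⟶ c) :
    (f ≫ g).length = f.length + g.length :=
  Quiver.Path.length_comp f g

lemma len_id (a : Paths V) : (𝟙 a : a ⟶ a).length = 0 := rfl

lemma len_eqToHom {a b : Paths V} (h : a = b) : (eqToHom h : a ⟶ b).length = 0 := by
  subst h; rfl

lemma path_zero {a b : Paths V} (p : a ⟶ b) (h : Quiver.Path.length p = 0) :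
    ∃ h' : a = b, p = eqToHom h' := by
  obtain rfl := Quiver.Path.eq_of_length_zero p h
  obtain rfl := Quiver.Path.eq_nil_of_length_zero p h
  exact ⟨rfl, by simp; rfl⟩

lemma len_toPath {a b : V} (f : a ⟶ b) : (Quiver.Hom.toPath f).length = 1 := rfl

lemma exists_edge {a b : V} (p : Quiver.Path a b) (h : p.length = 1) :
    ∃ e : a ⟶ b, p = Quiver.Hom.toPath e := by
  cases p with
  | nil => simp at h
  | cons q ed =>
    cases q with
    | nil => exact ⟨ed, rfl⟩
    | cons r f => simp [Quiver.Path.length] at h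

lemma prefunctor_eq (F : Prefunctor V V) (hobj : ∀ x, F.obj x = x)
    (hmap : ∀ {x y : V} (f : x ⟶ y),
      (Paths.of V).map (F.map f) =
        eqToHom (congrArg (Paths.of V).obj (hobj x)) ≫ (Paths.of V).map f ≫
          eqToHom (congrArg (Paths.of V).obj (hobj y).symm)) :
    F = Prefunctor.id V := by
  obtain ⟨Fo, Fm⟩ := F
  have ho : Fo = fun x => x := funext hobj
  subst ho
  have hm : ∀ {x y : V} (f : x ⟶ y), Fm f = f := by
    intro x y f
    have h := hmap f
    have e1 : eqToHom (congrArg (Paths.of V).obj (hobj x)) = 𝟙 ((Paths.of V).obj x) := rfl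
    have e2 : eqToHom (congrArg (Paths.of V).obj (hobj y).symm) = 𝟙 ((Paths.of V).obj y) := rfl
    rw [e1, e2, Category.id_comp, Category.comp_id] at h
    have h' : Quiver.Path.nil.cons (Fm f) = Quiver.Path.nil.cons f := h
    simpa using h'
  have hFm : @Fm = fun x y (f : x ⟶ y) => f := by
    funext x y f
    exact hm f
  rw [hFm]
  rfl

end Stmt15Aux

open Stmt15Aux

/-- If the free categories on two quivers `G` and `H` are equivalent, then `G`
and `H` are isomorphic as quivers. -/
theorem stmt15 {G H : Type*} [Quiver G] [Quiver H]
    (e : Paths G ≌ Paths H) :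
    ∃ (F : Prefunctor G H) (K : Prefunctor H G),
      F.comp K = Prefunctor.id G ∧ K.comp F = Prefunctor.id H := by
  classical
  -- unit and counit components are eqToHoms
  have unit0 : ∀ x : Paths G, ∃ h : x = e.inverse.obj (e.functor.obj x),
      e.unit.app x = eqToHom h := by
    intro x
    apply path_zero
    have h2 : e.unit.app x ≫ e.unitInv.app x = 𝟙 x := e.unitIso.hom_inv_id_app x
    have h1 := congrArg Quiver.Path.length h2
    rw [len_comp] at h1
    have h3 : Quiver.Path.length (𝟙 x : x ⟶ x) = 0 := rfl
    omega
  have counit0 : ∀ y : Paths H, ∃ h : e.functor.obj (e.inverse.obj y) = y,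
      e.counit.app y = eqToHom h := by
    intro y
    apply path_zero
    have h2 : e.counit.app y ≫ e.counitInv.app y
        = 𝟙 (e.functor.obj (e.inverse.obj y)) := e.counitIso.hom_inv_id_app y
    have h1 := congrArg Quiver.Path.length h2
    rw [len_comp] at h1
    have h3 : Quiver.Path.length (𝟙 (e.functor.obj (e.inverse.obj y)) :
        e.functor.obj (e.inverse.obj y) ⟶ e.functor.obj (e.inverse.obj y)) = 0 := rfl
    omega
  -- the composites conjugate by eqToHoms
  have hKF : ∀ {x y : Paths G} (f : x ⟶ y),
      e.inverse.map (e.functor.map f) =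
        eqToHom (unit0 x).choose.symm ≫ f ≫ eqToHom (unit0 y).choose := by
    intro x y f
    have h1 := e.unit.naturality f
    rw [(unit0 x).choose_spec, (unit0 y).choose_spec] at h1
    simp only [Functor.id_map, Functor.comp_map] at h1
    calc e.inverse.map (e.functor.map f)
        = eqToHom (unit0 x).choose.symm ≫
            (eqToHom (unit0 x).choose ≫ e.inverse.map (e.functor.map f)) := by simp
      _ = eqToHom (unit0 x).choose.symm ≫ f ≫ eqToHom (unit0 y).choose := by
            rw [← h1]
  have hFK : ∀ {x y : Paths H} (f : x ⟶ y),
      e.functor.map (e.inverse.map f) =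
        eqToHom (counit0 x).choose ≫ f ≫ eqToHom (counit0 y).choose.symm := by
    intro x y f
    have h1 := e.counit.naturality f
    rw [(counit0 x).choose_spec, (counit0 y).choose_spec] at h1
    simp only [Functor.id_map, Functor.comp_map] at h1
    calc e.functor.map (e.inverse.map f)
        = (e.functor.map (e.inverse.map f) ≫ eqToHom (counit0 y).choose) ≫
            eqToHom (counit0 y).choose.symm := by simp
      _ = eqToHom (counit0 x).choose ≫ f ≫ eqToHom (counit0 y).choose.symm := by
            rw [h1]; simp
  -- length is preserved by the composites
  have lenKF : ∀ {x y : Paths G} (f : x ⟶ y),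
      (e.inverse.map (e.functor.map f)).length = f.length := by
    intro x y f
    rw [hKF f, len_comp, len_comp, len_eqToHom, len_eqToHom]
    omega
  have lenFK : ∀ {x y : Paths H} (f : x ⟶ y),
      (e.functor.map (e.inverse.map f)).length = f.length := by
    intro x y f
    rw [hFK f, len_comp, len_comp, len_eqToHom, len_eqToHom]
    omega
  -- images of edges have positive length
  have edgeF : ∀ {u v : G} (q : u ⟶ v),
      1 ≤ (e.functor.map (Quiver.Hom.toPath q) : _ ⟶ _).length := by
    intro u v q
    by_contra hlt
    have h0 : (e.functor.map (Quiver.Hom.toPath q) : _ ⟶ _).length = 0 := by omega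
    obtain ⟨h, hh⟩ := path_zero (e.functor.map (Quiver.Hom.toPath q)) h0
    have h2 := lenKF (Quiver.Hom.toPath q)
    rw [hh, eqToHom_map, len_eqToHom, len_toPath] at h2
    exact absurd h2 (by omega)
  have edgeK : ∀ {u v : H} (q : u ⟶ v),
      1 ≤ (e.inverse.map (Quiver.Hom.toPath q) : _ ⟶ _).length := by
    intro u v q
    by_contra hlt
    have h0 : (e.inverse.map (Quiver.Hom.toPath q) : _ ⟶ _).length = 0 := by omega
    obtain ⟨h, hh⟩ := path_zero (e.inverse.map (Quiver.Hom.toPath q)) h0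
    have h2 := lenFK (Quiver.Hom.toPath q)
    rw [hh, eqToHom_map, len_eqToHom, len_toPath] at h2
    exact absurd h2 (by omega)
  -- functors do not decrease length
  have lenF_ge : ∀ {x y : Paths G} (f : x ⟶ y), f.length ≤ (e.functor.map f).length := by
    intro x y f
    induction f using Paths.induction with
    | id => simp [len_id]
    | comp p q ih =>
      rw [len_comp, e.functor.map_comp, len_comp]
      have h3 := edgeF q
      have h4 := len_toPath q
      simp only [Paths.of_map] at *
      exact Nat.add_le_add ih h3
  have lenK_ge : ∀ {x y : Paths H} (f : x ⟶ y), f.length ≤ (e.inverse.map f).length := by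
    intro x y f
    induction f using Paths.induction with
    | id => simp [len_id]
    | comp p q ih =>
      rw [len_comp, e.inverse.map_comp, len_comp]
      have h3 := edgeK q
      have h4 := len_toPath q
      simp only [Paths.of_map] at *
      exact Nat.add_le_add ih h3
  -- edges map to edges
  have lenF_eq : ∀ {u v : G} (q : u ⟶ v),
      (e.functor.map (Quiver.Hom.toPath q) : _ ⟶ _).length = 1 := by
    intro u v q
    have h1 := lenK_ge (e.functor.map (Quiver.Hom.toPath q))
    have h2 := lenKF (Quiver.Hom.toPath q)
    have h3 := edgeF q
    rw [len_toPath] at h2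
    omega
  have lenK_eq : ∀ {u v : H} (q : u ⟶ v),
      (e.inverse.map (Quiver.Hom.toPath q) : _ ⟶ _).length = 1 := by
    intro u v q
    have h1 := lenF_ge (e.inverse.map (Quiver.Hom.toPath q))
    have h2 := lenFK (Quiver.Hom.toPath q)
    have h3 := edgeK q
    rw [len_toPath] at h2
    omega
  -- the prefunctors
  refine ⟨⟨fun x => e.functor.obj x, fun {u v} q => (exists_edge _ (lenF_eq q)).choose⟩,
    ⟨fun y => e.inverse.obj y, fun {u v} q => (exists_edge _ (lenK_eq q)).choose⟩, ?_, ?_⟩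
  · apply prefunctor_eq (V := G) _ (fun x => (unit0 x).choose.symm)
    intro x y f
    have s1 := (exists_edge _ (lenF_eq f)).choose_spec
    have s2 := (exists_edge _ (lenK_eq ((exists_edge _ (lenF_eq f)).choose))).choose_spec
    simp only [Prefunctor.comp_map, Prefunctor.mk_map, Paths.of_map]
    show Quiver.Hom.toPath _ = _
    refine s2.symm.trans ((congrArg (fun t => e.inverse.map t) s1.symm).trans ?_)
    exact hKF (Quiver.Hom.toPath f)
  · apply prefunctor_eq (V := H) _ (fun y => (counit0 y).choose)
    intro x y f
    have s1 := (exists_edge _ (lenK_eq f)).choose_spec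
    have s2 := (exists_edge _ (lenF_eq ((exists_edge _ (lenK_eq f)).choose))).choose_spec
    simp only [Prefunctor.comp_map, Prefunctor.mk_map, Paths.of_map]
    show Quiver.Hom.toPath _ = _
    refine s2.symm.trans ((congrArg (fun t => e.functor.map t) s1.symm).trans ?_)
    exact hFK (Quiver.Hom.toPath f)
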